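/- arXiv:1009.3356 — 5 statements merged into one kernel-verified Lean document; each statement's English description precedes it below -/
import Mathlib

section
/- Let H be a real Hilbert space, let T be an invertible positive bounded operator on H, let A be a bounded operator on H with closed range, let b ∈ H be such that the set S = {x ∈ H : Ax = b} is nonempty, and let p ∈ H and a ∈ ℝ. Let B = A ∘ T^{-1/2} and let B‡ be the Moore–Penrose inverse of B. Define Φ(x) = ⟨x, Tx⟩ + ⟨p, x⟩ + a and x̂ = T^{-1/2} B‡ ((1/2) A T^{-1} p + b) − (1/2) T^{-1} p. Then A x̂ = b, Φ(x̂) ≤ Φ(x) for every x ∈ S, and if x ∈ S satisfies Φ(x) = Φ(x̂) then x = x̂ (i.e., x̂ is the unique minimizer of Φ over S). -/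
open scoped RealInnerProductSpace

/-- Minimization of a positive definite quadratic functional `Φ(x) = ⟪x, Tx⟫ + ⟪p, x⟫ + a`
over the solution set `S = {x : A x = b}` of a consistent linear constraint:
the unique minimizer is `xhat = T^{-1/2} (A T^{-1/2})‡ ((1/2) A T^{-1} p + b) − (1/2) T^{-1} p`,
where `‡` denotes the Moore–Penrose inverse. -/
theorem min_quadratic_functional_pos_def
    {H : Type*} [NormedAddCommGroup H] [InnerProductSpace ℝ H] [CompleteSpace H]
    (T A X Xinv Tinv Bd : H →L[ℝ] H) (b p : H) (a : ℝ)
    (hT : T.IsPositive)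
    (hTinv : T ∘L Tinv = 1 ∧ Tinv ∘L T = 1)
    (hX : X.IsPositive) (hX2 : X ∘L X = T)
    (hXinv : X ∘L Xinv = 1 ∧ Xinv ∘L X = 1)
    (hA : IsClosed (LinearMap.range (A : H →ₗ[ℝ] H) : Set H))
    (hS : ∃ x, A x = b)
    -- `Bd` is the Moore–Penrose inverse of `B = A ∘ T^{-1/2}`:
    (hBd1 : (A ∘L Xinv) ∘L Bd ∘L (A ∘L Xinv) = A ∘L Xinv)
    (hBd2 : Bd ∘L (A ∘L Xinv) ∘L Bd = Bd)
    (hBd3 : ContinuousLinearMap.adjoint ((A ∘L Xinv) ∘L Bd) = (A ∘L Xinv) ∘L Bd)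
    (hBd4 : ContinuousLinearMap.adjoint (Bd ∘L (A ∘L Xinv)) = Bd ∘L (A ∘L Xinv))
    (Φ : H → ℝ) (hΦ : ∀ x, Φ x = ⟪x, T x⟫ + ⟪p, x⟫ + a)
    (xhat : H)
    (hxhat : xhat = Xinv (Bd ((1/2 : ℝ) • A (Tinv p) + b)) - (1/2 : ℝ) • Tinv p) :
    A xhat = b ∧ (∀ x, A x = b → Φ xhat ≤ Φ x) ∧
      (∀ x, A x = b → Φ x = Φ xhat → x = xhat) := by
  obtain ⟨x₀, hx₀⟩ := hS
  -- pointwise versions of the algebraic hypotheses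
  have hXiX : ∀ v, Xinv (X v) = v := fun v => by
    have := ContinuousLinearMap.ext_iff.mp hXinv.2 v; simpa using this
  have hXXi : ∀ v, X (Xinv v) = v := fun v => by
    have := ContinuousLinearMap.ext_iff.mp hXinv.1 v; simpa using this
  have hTpt : ∀ v, T v = X (X v) := fun v => by
    have := ContinuousLinearMap.ext_iff.mp hX2 v; simpa using this.symm
  have hTiT : ∀ v, Tinv (T v) = v := fun v => by
    have := ContinuousLinearMap.ext_iff.mp hTinv.2 v; simpa using this
  have hTipt : ∀ v, Tinv v = Xinv (Xinv v) := fun v => by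
    have h1 : T (Xinv (Xinv v)) = v := by rw [hTpt, hXXi, hXXi]
    conv_lhs => rw [← h1]
    rw [hTiT]
  have hXsym : ∀ u v : H, ⟪X u, v⟫ = ⟪u, X v⟫ := fun u v => by
    exact hX.1 u v
  set D : H →L[ℝ] H := Bd ∘L (A ∘L Xinv) with hD
  have hDsym : ∀ u v : H, ⟪D u, v⟫ = ⟪u, D v⟫ := fun u v => by
    conv_lhs => rw [← hBd4]
    exact ContinuousLinearMap.adjoint_inner_left D v u
  have hDpt : ∀ v, D v = Bd (A (Xinv v)) := fun v => rfl
  have hBd1' : ∀ v, A (Xinv (Bd (A (Xinv v)))) = A (Xinv v) := fun v => by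
    have := ContinuousLinearMap.ext_iff.mp hBd1 v; exact this
  have hBd2' : ∀ v, Bd (A (Xinv (Bd v))) = Bd v := fun v => by
    have := ContinuousLinearMap.ext_iff.mp hBd2 v; simpa using this
  set c₀ : H := (1/2 : ℝ) • A (Tinv p) + b with hc₀
  set w : H := Bd c₀ with hw
  set z : H := X x₀ + (1/2 : ℝ) • Xinv p with hz
  have hBz : A (Xinv z) = c₀ := by
    rw [hz, map_add, map_smul, map_add, map_smul, hXiX, ← hTipt, hx₀, hc₀]
    exact add_comm _ _
  have hBw : A (Xinv w) = c₀ := by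
    rw [hw, ← hBz]; exact hBd1' z
  have hDw : Bd (A (Xinv w)) = w := by rw [hBw]
  -- X xhat + (1/2) • Xinv p = w
  have hyhat : X xhat + (1/2 : ℝ) • Xinv p = w := by
    rw [hxhat, map_sub, map_smul, hXXi, hTipt, hXXi]
    abel
  have hXxhat : X xhat = w - (1/2 : ℝ) • Xinv p := eq_sub_of_add_eq hyhat
  have hAxhat : A xhat = b := by
    conv_lhs => rw [← hXiX xhat]
    rw [hXxhat, map_sub, map_smul, map_sub, map_smul, hBw, ← hTipt, hc₀]
    abel
  -- the quadratic identity
  have hΦy : ∀ x, Φ x = ‖X x + (1/2 : ℝ) • Xinv p‖^2 + (a - ‖(1/2 : ℝ) • Xinv p‖^2) := by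
    intro x
    rw [hΦ]
    have h1 : ⟪x, T x⟫ = ‖X x‖^2 := by
      rw [hTpt, ← hXsym, real_inner_self_eq_norm_sq]
    have h2 : ⟪X x, (1/2 : ℝ) • Xinv p⟫ = (1/2) * ⟪p, x⟫ := by
      rw [real_inner_smul_right, hXsym, hXXi, real_inner_comm]
    rw [norm_add_sq_real, h1, h2]
    ring
  have key : ∀ x, A x = b →
      Φ x = Φ xhat + ‖(X x + (1/2 : ℝ) • Xinv p) - w‖^2 := by
    intro x hx
    set y : H := X x + (1/2 : ℝ) • Xinv p with hy
    have hBy : A (Xinv y) = c₀ := by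
      rw [hy, map_add, map_smul, map_add, map_smul, hXiX, ← hTipt, hx, hc₀]
      exact add_comm _ _
    have hDy : D y = w := by rw [hDpt, hBy]
    have hDw' : D w = w := by rw [hDpt, hDw]
    have hwz : w = D z := by rw [hDpt, hBz]
    have horth : ⟪w, y - w⟫ = 0 := by
      nth_rewrite 1 [hwz]
      rw [hDsym]
      have h0 : D (y - w) = 0 := by rw [map_sub, hDy, hDw', sub_self]
      rw [h0, inner_zero_right]
    have hpyth : ‖y‖^2 = ‖w‖^2 + ‖y - w‖^2 := by
      have hrw : y = w + (y - w) := by abel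
      calc ‖y‖^2 = ‖w + (y - w)‖^2 := by rw [← hrw]
        _ = ‖w‖^2 + 2 * ⟪w, y - w⟫ + ‖y - w‖^2 := norm_add_sq_real _ _
        _ = ‖w‖^2 + ‖y - w‖^2 := by rw [horth]; ring
    have hx1 := hΦy x
    have hx2 := hΦy xhat
    rw [hyhat] at hx2
    rw [hx1, hx2, ← hy, hpyth]
    ring
  refine ⟨hAxhat, ?_, ?_⟩
  · intro x hx
    rw [key x hx]
    exact le_add_of_nonneg_right (by positivity)
  · intro x hx heq
    have h0 : ‖(X x + (1/2 : ℝ) • Xinv p) - w‖^2 = 0 := by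
      have := key x hx
      linarith [this, heq]
    have h1 : X x + (1/2 : ℝ) • Xinv p = w := by
      have := pow_eq_zero_iff (n := 2) (by norm_num) |>.mp h0
      rw [norm_eq_zero] at this
      exact sub_eq_zero.mp this
    have h2 : X x = X xhat := by
      rw [← hyhat] at h1
      exact add_right_cancel h1
    calc x = Xinv (X x) := (hXiX x).symm
      _ = Xinv (X xhat) := by rw [h2]
      _ = xhat := hXiX xhat
end

section
/- Let H be a real Hilbert space, let T be a positive bounded operator on H with closed range, and let X be the positive square root of T (X positive, X² = T). Let A be a bounded operator on H with closed range and let b ∈ H be such that the set S ∩ N(T)^⊥ is nonempty, where S = {x ∈ H : Ax = b} and N(T)^⊥ is the orthogonal complement of the kernel of T. Let X‡, T‡ be the Moore–Penrose inverses of X and T, assume that the operator P_{A*} P_T (the composition of the orthogonal projection onto N(A)^⊥ with the orthogonal projection onto the range of T) has closed range, and let C‡ be the Moore–Penrose inverse of C = A ∘ X‡. Let p ∈ H, a ∈ ℝ, and define Φ(x) = ⟨x, Tx⟩ + ⟨p, x⟩ + a and x̂ = X‡ C‡ ((1/2) A T‡ p + b) − (1/2) T‡ p. Then x̂ ∈ S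 ∩ N(T)^⊥, Φ(x̂) ≤ Φ(x) for every x ∈ S ∩ N(T)^⊥, and if x ∈ S ∩ N(T)^⊥ satisfies Φ(x) = Φ(x̂) then x = x̂ (i.e., x̂ is the unique minimizer of Φ over S ∩ N(T)^⊥). -/
open scoped RealInnerProductSpace

lemma mp_unique {R : Type*} [Monoid R] [StarMul R] {b y z : R}
    (hy1 : b * (y * b) = b) (hy2 : y * (b * y) = y)
    (hy3 : star (b * y) = b * y) (hy4 : star (y * b) = y * b)
    (hz1 : b * (z * b) = b) (hz2 : z * (b * z) = z)
    (hz3 : star (b * z) = b * z) (hz4 : star (z * b) = z * b) :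
    y = z := by
  have h1 : b * y = b * z := by
    calc b * y = (b * (z * b)) * y := by rw [hz1]
      _ = (b * z) * (b * y) := by simp only [mul_assoc]
      _ = star (b * z) * star (b * y) := by rw [hz3, hy3]
      _ = star ((b * y) * (b * z)) := (star_mul _ _).symm
      _ = star (b * (y * b) * z) := by simp only [mul_assoc]
      _ = star (b * z) := by rw [hy1]
      _ = b * z := hz3
  have h2 : y * b = z * b := by
    calc y * b = y * (b * (z * b)) := by rw [hz1]
      _ = (y * b) * (z * b) := by simp only [mul_assoc]
      _ = star (y * b) * star (z * b) := by rw [hy4, hz4]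
      _ = star ((z * b) * (y * b)) := (star_mul _ _).symm
      _ = star (z * (b * (y * b))) := by simp only [mul_assoc]
      _ = star (z * b) := by rw [hy1]
      _ = z * b := hz4
  calc y = y * (b * y) := hy2.symm
    _ = y * (b * z) := by rw [h1]
    _ = (y * b) * z := by simp only [mul_assoc]
    _ = (z * b) * z := by rw [h2]
    _ = z * (b * z) := by simp only [mul_assoc]
    _ = z := hz2

lemma mp_star_self {R : Type*} [Monoid R] [StarMul R] {b y : R}
    (hb : star b = b)
    (hy1 : b * (y * b) = b) (hy2 : y * (b * y) = y)
    (hy3 : star (b * y) = b * y) (hy4 : star (y * b) = y * b) :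
    star y = y := by
  have k3 : b * star y = y * b := by
    have h : star (y * b) = star b * star y := star_mul _ _
    rw [hb] at h; rw [← h, hy4]
  have k4 : star y * b = b * y := by
    have h : star (b * y) = star y * star b := star_mul _ _
    rw [hb] at h; rw [← h, hy3]
  refine (mp_unique (b := b) ?_ ?_ ?_ ?_ hy1 hy2 hy3 hy4)
  · have h : star (b * (star y * b)) = b := by
      rw [star_mul, star_mul, star_star, hb, mul_assoc, hy1]
    rw [← star_star (b * (star y * b)), h, hb]
  · have h : star (star y * (b * star y)) = y := by
      rw [star_mul, star_mul, star_star, hb, mul_assoc, hy2]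
    rw [← star_star (star y * (b * star y)), h]
  · rw [star_mul, star_star, hb, ← k3]
  · rw [star_mul, star_star, hb, ← k4]

/-- Restricted linearly constrained minimization of a positive semidefinite quadratic
functional `Φ(x) = ⟪x, Tx⟫ + ⟪p, x⟫ + a` over `S ∩ N(T)^⊥`, where `S = {x : A x = b}`:
assuming `P_{A*} P_T` has closed range, the unique minimizer is
`x̂ = X‡ (A X‡)‡ ((1/2) A T‡ p + b) − (1/2) T‡ p`, where `X` is the positive square root
of `T` and `‡` denotes the Moore–Penrose inverse. -/
theorem min_quadratic_functional_pos_semidef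
    {H : Type*} [NormedAddCommGroup H] [InnerProductSpace ℝ H] [CompleteSpace H]
    (T X A Xd Td Cd PA PT : H →L[ℝ] H) (b p : H) (a : ℝ)
    (hT : T.IsPositive) (hTrange : IsClosed (LinearMap.range (T : H →ₗ[ℝ] H) : Set H))
    (hX : X.IsPositive) (hX2 : X ∘L X = T)
    (hA : IsClosed (LinearMap.range (A : H →ₗ[ℝ] H) : Set H))
    (hS : ∃ x, A x = b ∧ x ∈ (LinearMap.ker (T : H →ₗ[ℝ] H))ᗮ)
    -- `Xd` is the Moore–Penrose inverse of `X`: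
    (hXd1 : X ∘L Xd ∘L X = X) (hXd2 : Xd ∘L X ∘L Xd = Xd)
    (hXd3 : ContinuousLinearMap.adjoint (X ∘L Xd) = X ∘L Xd)
    (hXd4 : ContinuousLinearMap.adjoint (Xd ∘L X) = Xd ∘L X)
    -- `Td` is the Moore–Penrose inverse of `T`:
    (hTd1 : T ∘L Td ∘L T = T) (hTd2 : Td ∘L T ∘L Td = Td)
    (hTd3 : ContinuousLinearMap.adjoint (T ∘L Td) = T ∘L Td)
    (hTd4 : ContinuousLinearMap.adjoint (Td ∘L T) = Td ∘L T)
    -- `PA` is the orthogonal projection onto `N(A)^⊥` and `PT` that onto `R(T)`: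
    (hPA : ∀ x, PA x ∈ (LinearMap.ker (A : H →ₗ[ℝ] H))ᗮ ∧ x - PA x ∈ ((LinearMap.ker (A : H →ₗ[ℝ] H))ᗮ)ᗮ)
    (hPT : ∀ x, PT x ∈ LinearMap.range (T : H →ₗ[ℝ] H) ∧ x - PT x ∈ (LinearMap.range (T : H →ₗ[ℝ] H))ᗮ)
    (hclosed : IsClosed (LinearMap.range ((PA ∘L PT : H →L[ℝ] H) : H →ₗ[ℝ] H) : Set H))
    -- `Cd` is the Moore–Penrose inverse of `C = A ∘ X‡`:
    (hCd1 : (A ∘L Xd) ∘L Cd ∘L (A ∘L Xd) = A ∘L Xd)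
    (hCd2 : Cd ∘L (A ∘L Xd) ∘L Cd = Cd)
    (hCd3 : ContinuousLinearMap.adjoint ((A ∘L Xd) ∘L Cd) = (A ∘L Xd) ∘L Cd)
    (hCd4 : ContinuousLinearMap.adjoint (Cd ∘L (A ∘L Xd)) = Cd ∘L (A ∘L Xd))
    (Φ : H → ℝ) (hΦ : ∀ x, Φ x = ⟪x, T x⟫ + ⟪p, x⟫ + a)
    (xhat : H)
    (hxhat : xhat = Xd (Cd ((1/2 : ℝ) • A (Td p) + b)) - (1/2 : ℝ) • Td p) :
    (A xhat = b ∧ xhat ∈ (LinearMap.ker (T : H →ₗ[ℝ] H))ᗮ) ∧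
      (∀ x, A x = b → x ∈ (LinearMap.ker (T : H →ₗ[ℝ] H))ᗮ → Φ xhat ≤ Φ x) ∧
      (∀ x, A x = b → x ∈ (LinearMap.ker (T : H →ₗ[ℝ] H))ᗮ → Φ x = Φ xhat → x = xhat) := by
  -- star/mul reformulation of the Penrose equations
  have sX : star X = X := hX.isSelfAdjoint
  have m1 : X * (Xd * X) = X := hXd1
  have m2 : Xd * (X * Xd) = Xd := hXd2
  have s3 : star (X * Xd) = X * Xd := by
    rw [ContinuousLinearMap.star_eq_adjoint]; exact hXd3
  have s4 : star (Xd * X) = Xd * X := by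
    rw [ContinuousLinearMap.star_eq_adjoint]; exact hXd4
  have sXd : star Xd = Xd := mp_star_self sX m1 m2 s3 s4
  have comm : Xd * X = X * Xd := by rw [← s3, star_mul, sXd, sX]
  have uXd : (X * Xd) * Xd = Xd := by rw [← comm, mul_assoc, m2]
  have a1 : (X * Xd) * X = X := by rw [mul_assoc, m1]
  have a2 : (Xd * X) * X = X := by rw [comm, mul_assoc, m1]
  have hTmul : T = X * X := hX2.symm
  -- Td = Xd * Xd
  have zt : (Xd * Xd) * (X * X) = X * Xd := by
    calc (Xd * Xd) * (X * X) = Xd * (Xd * (X * X)) := by rw [mul_assoc]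
      _ = Xd * ((Xd * X) * X) := by rw [← mul_assoc Xd X X]
      _ = Xd * X := by rw [a2]
      _ = X * Xd := comm
  have tz : (X * X) * (Xd * Xd) = X * Xd := by
    calc (X * X) * (Xd * Xd) = X * (X * (Xd * Xd)) := by rw [mul_assoc]
      _ = X * ((X * Xd) * Xd) := by rw [← mul_assoc X Xd Xd]
      _ = X * Xd := by rw [uXd]
  have e1 : T * ((Xd * Xd) * T) = T := by
    rw [hTmul, zt, ← comm, mul_assoc, m1]
  have e2 : (Xd * Xd) * (T * (Xd * Xd)) = Xd * Xd := by
    rw [hTmul, tz, mul_assoc, m2]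
  have e3 : star (T * (Xd * Xd)) = T * (Xd * Xd) := by rw [hTmul, tz, s3]
  have e4 : star ((Xd * Xd) * T) = (Xd * Xd) * T := by rw [hTmul, zt, s3]
  have sT3 : star (T * Td) = T * Td := by
    rw [ContinuousLinearMap.star_eq_adjoint]; exact hTd3
  have sT4 : star (Td * T) = Td * T := by
    rw [ContinuousLinearMap.star_eq_adjoint]; exact hTd4
  have hTdz : Td = Xd * Xd := mp_unique hTd1 hTd2 sT3 sT4 e1 e2 e3 e4
  -- (X Xd) Cd = Cd
  have hq : star (Cd * (A * Xd)) = Cd * (A * Xd) := by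
    rw [ContinuousLinearMap.star_eq_adjoint]; exact hCd4
  have hq2 : Cd * (A * Xd) = Xd * (star A * star Cd) := by
    rw [← hq, star_mul, star_mul, sXd, mul_assoc]
  have hq3 : (X * Xd) * (Cd * (A * Xd)) = Cd * (A * Xd) := by
    rw [hq2, ← mul_assoc, uXd]
  have hCd2' : Cd * ((A * Xd) * Cd) = Cd := hCd2
  have uCd : (X * Xd) * Cd = Cd := by
    calc (X * Xd) * Cd = (X * Xd) * (Cd * ((A * Xd) * Cd)) := by rw [hCd2']
      _ = ((X * Xd) * (Cd * (A * Xd))) * Cd := by simp only [mul_assoc]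
      _ = (Cd * (A * Xd)) * Cd := by rw [hq3]
      _ = Cd := by rw [mul_assoc, hCd2']
  -- pointwise facts
  have F1 : ∀ w, X (Xd (X w)) = X w := fun w => by
    simpa [ContinuousLinearMap.mul_apply] using DFunLike.congr_fun m1 w
  have F2 : ∀ w, Xd (X (Xd w)) = Xd w := fun w => by
    simpa [ContinuousLinearMap.mul_apply] using DFunLike.congr_fun m2 w
  have F3 : ∀ w, X (Xd (Cd w)) = Cd w := fun w => by
    simpa [ContinuousLinearMap.mul_apply] using DFunLike.congr_fun uCd w
  have F4 : ∀ w, X (Xd (Xd w)) = Xd w := fun w => by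
    simpa [ContinuousLinearMap.mul_apply] using DFunLike.congr_fun uXd w
  have F5 : Td p = Xd (Xd p) := by
    simpa [ContinuousLinearMap.mul_apply] using DFunLike.congr_fun hTdz p
  have F6 : ∀ w, A (Xd (Cd (A (Xd w)))) = A (Xd w) := fun w => by
    simpa [ContinuousLinearMap.comp_apply] using DFunLike.congr_fun hCd1 w
  have hT2p : ∀ w, X (X w) = T w := fun w => by
    simpa [ContinuousLinearMap.comp_apply] using DFunLike.congr_fun hX2 w
  -- inner product moves
  have adjX : ∀ u v : H, ⟪X u, v⟫ = ⟪u, X v⟫ := by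
    intro u v
    have h := ContinuousLinearMap.adjoint_inner_left X v u
    rwa [← ContinuousLinearMap.star_eq_adjoint, sX] at h
  have adjXd : ∀ u v : H, ⟪Xd u, v⟫ = ⟪u, Xd v⟫ := by
    intro u v
    have h := ContinuousLinearMap.adjoint_inner_left Xd v u
    rwa [← ContinuousLinearMap.star_eq_adjoint, sXd] at h
  have adjP : ∀ u v : H, ⟪Xd (X u), v⟫ = ⟪u, Xd (X v)⟫ := by
    intro u v
    have h := ContinuousLinearMap.adjoint_inner_left (Xd ∘L X) v u
    rw [hXd4] at h
    simpa [ContinuousLinearMap.comp_apply] using h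
  have adjQ : ∀ u v : H, ⟪Cd (A (Xd u)), v⟫ = ⟪u, Cd (A (Xd v))⟫ := by
    intro u v
    have h := ContinuousLinearMap.adjoint_inner_left (Cd ∘L (A ∘L Xd)) v u
    rw [hCd4] at h
    simpa [ContinuousLinearMap.comp_apply] using h
  -- kernels
  have hkerX : ∀ u, T u = 0 ↔ X u = 0 := by
    intro u
    constructor
    · intro h
      have h2 : ⟪X u, X u⟫ = 0 := by rw [adjX, hT2p, h, inner_zero_right]
      exact inner_self_eq_zero.mp h2
    · intro h
      rw [← hT2p, h, map_zero]
  -- membership characterization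
  have hmem : ∀ u : H, u ∈ (LinearMap.ker (T : H →ₗ[ℝ] H))ᗮ ↔ Xd (X u) = u := by
    intro u
    constructor
    · intro hu
      set w := u - Xd (X u) with hw
      have hXw : X w = 0 := by rw [hw, map_sub, F1, sub_self]
      have hwker : w ∈ LinearMap.ker (T : H →ₗ[ℝ] H) := by
        rw [LinearMap.mem_ker, ContinuousLinearMap.coe_coe, ← hT2p, hXw, map_zero]
      have h1 : ⟪w, u⟫ = 0 :=
        (Submodule.mem_orthogonal _ _).mp hu w hwker
      have h2 : ⟪w, Xd (X u)⟫ = 0 := by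
        rw [← adjP, hXw, map_zero, inner_zero_left]
      have h3 : ⟪w, w⟫ = 0 := by
        rw [hw]
        rw [inner_sub_right, ← hw, h1, h2, sub_zero]
      have h4 : w = 0 := inner_self_eq_zero.mp h3
      have := sub_eq_zero.mp (hw ▸ h4)
      exact this.symm
    · intro h
      rw [Submodule.mem_orthogonal]
      intro v hv
      have hXv : X v = 0 := (hkerX v).mp (LinearMap.mem_ker.mp hv)
      calc ⟪v, u⟫ = ⟪v, Xd (X u)⟫ := by rw [h]
        _ = ⟪Xd (X v), u⟫ := (adjP v u).symm
        _ = 0 := by rw [hXv, map_zero, inner_zero_left]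
  -- set up data
  set c : H := (1/2 : ℝ) • Xd p with hc
  set d : H := (1/2 : ℝ) • A (Td p) + b with hd
  have hAXdc : A (Xd c) = (1/2 : ℝ) • A (Td p) := by
    rw [hc, map_smul, map_smul, ← F5]
  have hXXdc : X (Xd c) = c := by
    rw [hc, map_smul, map_smul, F4]
  have key : ∀ x, A x = b → Xd (X x) = x → A (Xd (X x + c)) = d := by
    intro x hxA hxP
    have h : Xd (X x + c) = x + Xd c := by rw [map_add, hxP]
    rw [h, map_add, hxA, hAXdc, hd, add_comm]
  obtain ⟨x0, hx0A, hx0m⟩ := hS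
  have hx0P := (hmem x0).mp hx0m
  have hz0 : A (Xd (X x0 + c)) = d := key x0 hx0A hx0P
  have hdR : A (Xd (Cd d)) = d := by
    have h := F6 (X x0 + c)
    rw [hz0] at h
    exact h
  have hxhat2 : xhat = Xd (Cd d) - Xd c := by
    rw [hxhat]
    congr 1
    rw [F5, hc, map_smul]
  have hxhatP : Xd (X xhat) = xhat := by
    rw [hxhat2, map_sub, map_sub, F2, F2]
  have hxhatA : A xhat = b := by
    rw [hxhat2, map_sub, hdR, hAXdc, hd, add_sub_cancel_left]
  have hXxhat : X xhat + c = Cd d := by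
    rw [hxhat2, map_sub, F3, hXXdc, sub_add_cancel]
  -- Φ formula
  have hPhi : ∀ x, Xd (X x) = x → Φ x = ‖X x + c‖^2 - ‖c‖^2 + a := by
    intro x hxP
    have h1 : ⟪x, T x⟫ = ‖X x‖^2 := by
      rw [← hT2p, ← adjX, real_inner_self_eq_norm_sq]
    have h2 : ⟪p, x⟫ = 2 * ⟪X x, c⟫ := by
      calc ⟪p, x⟫ = ⟪p, Xd (X x)⟫ := by rw [hxP]
        _ = ⟪Xd p, X x⟫ := (adjXd p (X x)).symm
        _ = 2 * ⟪X x, c⟫ := by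
            rw [hc, real_inner_smul_right, real_inner_comm]; ring
    rw [hΦ, h1, h2, norm_add_sq_real]; ring
  have hPyth : ∀ x, A x = b → Xd (X x) = x →
      ‖X x + c‖^2 = ‖Cd d‖^2 + ‖(X x + c) - Cd d‖^2 := by
    intro x hxA hxP
    have hz : A (Xd (X x + c)) = d := key x hxA hxP
    have hQfix : Cd (A (Xd (Cd d))) = Cd d := by rw [hdR]
    have hQz : Cd (A (Xd ((X x + c) - Cd d))) = 0 := by
      rw [map_sub, map_sub, map_sub, hz, hdR, sub_self]
    have horth : ⟪Cd d, (X x + c) - Cd d⟫ = 0 := by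
      calc ⟪Cd d, (X x + c) - Cd d⟫
          = ⟪Cd (A (Xd (Cd d))), (X x + c) - Cd d⟫ := by rw [hQfix]
        _ = ⟪Cd d, Cd (A (Xd ((X x + c) - Cd d)))⟫ := adjQ _ _
        _ = 0 := by rw [hQz, inner_zero_right]
    have h := norm_add_sq_real (Cd d) ((X x + c) - Cd d)
    rw [horth] at h
    simpa using h
  have hPhixhat : Φ xhat = ‖Cd d‖^2 - ‖c‖^2 + a := by
    rw [hPhi xhat hxhatP, hXxhat]
  refine ⟨⟨hxhatA, (hmem xhat).mpr hxhatP⟩, ?_, ?_⟩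
  · intro x hxA hxm
    have hxP := (hmem x).mp hxm
    rw [hPhi x hxP, hPhixhat]
    have h := hPyth x hxA hxP
    linarith [sq_nonneg ‖(X x + c) - Cd d‖, h]
  · intro x hxA hxm hEq
    have hxP := (hmem x).mp hxm
    have h1 : ‖X x + c‖^2 = ‖Cd d‖^2 := by
      have e1 := hPhi x hxP
      rw [hEq, hPhixhat] at e1
      linarith
    have h2 := hPyth x hxA hxP
    have h3 : ‖(X x + c) - Cd d‖^2 = 0 := by linarith
    have h4 : X x + c = Cd d := by
      have h5 : ‖(X x + c) - Cd d‖ = 0 :=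
        pow_eq_zero_iff (two_ne_zero) |>.mp h3
      exact sub_eq_zero.mp (norm_eq_zero.mp h5)
    have h5 : X x = X xhat := by
      have h6 : X x + c = X xhat + c := by rw [h4, hXxhat]
      exact add_right_cancel h6
    calc x = Xd (X x) := hxP.symm
      _ = Xd (X xhat) := by rw [h5]
      _ = xhat := hxhatP
end

section
/- Let H be a real Hilbert space, let X be a positive bounded operator on H with closed range, and let X‡ be the Moore–Penrose inverse of X. Then (X‡)² is the Moore–Penrose inverse of X², i.e., the pair (X², (X‡)²) satisfies the four Penrose equations. -/
/-- If `X` is a positive operator with closed range and Moore–Penrose inverse `X‡`,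
then `(X‡)²` is the Moore–Penrose inverse of `X²`, i.e. the pair `(X², (X‡)²)`
satisfies the four Penrose equations. -/
theorem sq_moore_penrose
    {H : Type*} [NormedAddCommGroup H] [InnerProductSpace ℝ H] [CompleteSpace H]
    (X Xd : H →L[ℝ] H)
    (hX : X.IsPositive) (hXrange : IsClosed (LinearMap.range (X : H →ₗ[ℝ] H) : Set H))
    -- `Xd` is the Moore–Penrose inverse of `X`:
    (hXd1 : X ∘L Xd ∘L X = X) (hXd2 : Xd ∘L X ∘L Xd = Xd)
    (hXd3 : ContinuousLinearMap.adjoint (X ∘L Xd) = X ∘L Xd)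
    (hXd4 : ContinuousLinearMap.adjoint (Xd ∘L X) = Xd ∘L X) :
    (X ∘L X) ∘L (Xd ∘L Xd) ∘L (X ∘L X) = X ∘L X ∧
    (Xd ∘L Xd) ∘L (X ∘L X) ∘L (Xd ∘L Xd) = Xd ∘L Xd ∧
    ContinuousLinearMap.adjoint ((X ∘L X) ∘L (Xd ∘L Xd)) = (X ∘L X) ∘L (Xd ∘L Xd) ∧
    ContinuousLinearMap.adjoint ((Xd ∘L Xd) ∘L (X ∘L X)) = (Xd ∘L Xd) ∘L (X ∘L X) := by
  have hsX : star X = X := hX.isSelfAdjoint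
  have h1 : X * (Xd * X) = X := hXd1
  have h2 : Xd * (X * Xd) = Xd := hXd2
  have h3 : star (X * Xd) = X * Xd := by
    rw [← ContinuousLinearMap.star_eq_adjoint] at hXd3; exact hXd3
  have h4 : star (Xd * X) = Xd * X := by
    rw [← ContinuousLinearMap.star_eq_adjoint] at hXd4; exact hXd4
  -- star Xd * X = X * Xd and X * star Xd = Xd * X
  have e1 : star Xd * X = X * Xd := by
    calc star Xd * X = star Xd * star X := by rw [hsX]
    _ = star (X * Xd) := (star_mul X Xd).symm
    _ = X * Xd := h3
  have e2 : X * star Xd = Xd * X := by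
    calc X * star Xd = star X * star Xd := by rw [hsX]
    _ = star (Xd * X) := (star_mul Xd X).symm
    _ = Xd * X := h4
  -- commutation: X * Xd = Xd * X
  have comm : X * Xd = Xd * X := by
    have a : X * Xd = (X * Xd) * (Xd * X) := by
      calc X * Xd = star Xd * X := e1.symm
      _ = star Xd * (X * (Xd * X)) := by rw [h1]
      _ = (star Xd * X) * (Xd * X) := by rw [mul_assoc]
      _ = (X * Xd) * (Xd * X) := by rw [e1]
    have b : Xd * X = (X * Xd) * (Xd * X) := by
      calc Xd * X = X * star Xd := e2.symm
      _ = (X * (Xd * X)) * star Xd := by rw [h1]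
      _ = (X * Xd) * (X * star Xd) := by simp only [mul_assoc]
      _ = (X * Xd) * (Xd * X) := by rw [e2]
    rw [a, ← b]
  -- the projection C = X * Xd = Xd * X
  have hCX : (X * Xd) * X = X := by rw [mul_assoc]; exact h1
  have hXC : X * (X * Xd) = X := by rw [comm]; exact h1
  have hCXd : (X * Xd) * Xd = Xd := by rw [comm, mul_assoc]; exact h2
  have hXdC : Xd * (X * Xd) = Xd := h2
  -- the two products collapse to C
  have P1 : (X * X) * (Xd * Xd) = X * Xd := by
    calc (X * X) * (Xd * Xd) = X * ((X * Xd) * Xd) := by simp only [mul_assoc]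
    _ = X * Xd := by rw [hCXd]
  have P2 : (Xd * Xd) * (X * X) = X * Xd := by
    calc (Xd * Xd) * (X * X) = Xd * ((Xd * X) * X) := by simp only [mul_assoc]
    _ = Xd * ((X * Xd) * X) := by rw [comm]
    _ = Xd * X := by rw [hCX]
    _ = X * Xd := comm.symm
  refine ⟨?_, ?_, ?_, ?_⟩
  · show (X * X) * ((Xd * Xd) * (X * X)) = X * X
    rw [P2, mul_assoc, hXC]
  · show (Xd * Xd) * ((X * X) * (Xd * Xd)) = Xd * Xd
    rw [P1, mul_assoc, hXdC]
  · show ContinuousLinearMap.adjoint ((X * X) * (Xd * Xd)) = (X * X) * (Xd * Xd)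
    rw [← ContinuousLinearMap.star_eq_adjoint, P1, h3]
  · show ContinuousLinearMap.adjoint ((Xd * Xd) * (X * X)) = (Xd * Xd) * (X * X)
    rw [← ContinuousLinearMap.star_eq_adjoint, P2, h3]
end

section
/- Let H be a real Hilbert space, let T be a positive bounded operator on H with closed range, let X be the positive square root of T with Moore–Penrose inverse X‡, and let A be a bounded operator on H with closed range. Then A ∘ X‡ has closed range if and only if the operator P_{A*} P_T (the composition of the orthogonal projection onto N(A)^⊥ with the orthogonal projection onto the range of T) has closed range. -/
open ContinuousLinearMap Submodule Topology

/-- Key lemma: if `A` has closed range and every value `A y` is attained on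
`(ker A)ᗮ`, then for a submodule `N ≤ (ker A)ᗮ`, the image `A '' N` is closed
iff `N` is closed. -/
lemma image_isClosed_iff_of_le_orthogonal_ker
    {H : Type*} [NormedAddCommGroup H] [InnerProductSpace ℝ H] [CompleteSpace H]
    (A : H →L[ℝ] H) (hA : IsClosed (LinearMap.range (A : H →ₗ[ℝ] H) : Set H))
    (hsurj : ∀ y : H, ∃ x ∈ (LinearMap.ker (A : H →ₗ[ℝ] H))ᗮ, A x = A y)
    (N : Submodule ℝ H) (hN : N ≤ (LinearMap.ker (A : H →ₗ[ℝ] H))ᗮ) :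
    IsClosed ((Submodule.map (A : H →ₗ[ℝ] H) N : Submodule ℝ H) : Set H) ↔ IsClosed (N : Set H) := by
  set K : Submodule ℝ H := (LinearMap.ker (A : H →ₗ[ℝ] H))ᗮ with hK
  set R : Submodule ℝ H := LinearMap.range (A : H →ₗ[ℝ] H) with hR
  haveI : CompleteSpace R := hA.completeSpace_coe
  haveI : CompleteSpace K := (Submodule.isClosed_orthogonal _).completeSpace_coe
  -- the restriction of `A` to `K`, with codomain `R`
  set e : K →L[ℝ] H := A.comp K.subtypeL with he
  have hmem : ∀ x : K, e x ∈ R := fun x => LinearMap.mem_range_self _ _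
  set f : K →L[ℝ] R := e.codRestrict R hmem with hf
  have hinj : LinearMap.ker (f : K →ₗ[ℝ] R) = ⊥ := by
    ext x
    simp only [Submodule.mem_bot, LinearMap.mem_ker]
    constructor
    · intro hx
      have hx0 : A (x : H) = 0 := congrArg Subtype.val hx
      have hxker : (x : H) ∈ LinearMap.ker (A : H →ₗ[ℝ] H) := hx0
      have : ((x : H)) = 0 :=
        inner_self_eq_zero.mp (Submodule.inner_right_of_mem_orthogonal hxker x.2)
      exact Subtype.ext this
    · rintro rfl; exact map_zero f
  have hsurjf : LinearMap.range (f : K →ₗ[ℝ] R) = ⊤ := by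
    rw [LinearMap.range_eq_top]
    rintro ⟨y, z, rfl⟩
    obtain ⟨x, hxK, hx⟩ := hsurj z
    exact ⟨⟨x, hxK⟩, Subtype.ext hx⟩
  set g := ContinuousLinearEquiv.ofBijective f hinj hsurjf with hg
  have hgapp : ∀ x : K, (g x : H) = A (x : H) := fun x => rfl
  set N' : Set K := ((↑) : K → H) ⁻¹' (N : Set H) with hN'
  have hcoeN : (Subtype.val '' N' : Set H) = (N : Set H) := by
    apply Set.Subset.antisymm
    · rintro _ ⟨x, hx, rfl⟩; exact hx
    · intro x hx; exact ⟨⟨x, hN hx⟩, hx, rfl⟩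
  have hclK : IsClosedEmbedding ((↑) : K → H) :=
    (Submodule.isClosed_orthogonal _).isClosedEmbedding_subtypeVal
  have hclR : IsClosedEmbedding ((↑) : R → H) := hA.isClosedEmbedding_subtypeVal
  have h1 : IsClosed (N : Set H) ↔ IsClosed N' := by
    constructor
    · intro h; exact h.preimage continuous_subtype_val
    · intro h
      rw [← hcoeN]
      exact hclK.isClosedMap _ h
  -- identify the image
  have himg : ((Submodule.map (A : H →ₗ[ℝ] H) N : Submodule ℝ H) : Set H) = Subtype.val '' (⇑g '' N') := by
    apply Set.Subset.antisymm
    · rintro _ ⟨x, hx, rfl⟩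
      exact ⟨g ⟨x, hN hx⟩, ⟨⟨x, hN hx⟩, hx, rfl⟩, rfl⟩
    · rintro _ ⟨_, ⟨x, hx, rfl⟩, rfl⟩
      exact ⟨(x : H), hx, rfl⟩
  have h2 : IsClosed ((Submodule.map (A : H →ₗ[ℝ] H) N : Submodule ℝ H) : Set H) ↔ IsClosed (⇑g '' N') := by
    rw [himg]
    exact (hclR.isClosed_iff_image_isClosed (s := ⇑g '' N')).symm
  rw [h2, h1]
  exact g.toHomeomorph.isClosed_image

/-- For a self-adjoint operator `B`, `(range B)ᗮ = ker B`. -/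
lemma orth_range_eq_ker
    {H : Type*} [NormedAddCommGroup H] [InnerProductSpace ℝ H] [CompleteSpace H]
    (B : H →L[ℝ] H) (hB : ContinuousLinearMap.adjoint B = B) :
    (LinearMap.range (B : H →ₗ[ℝ] H))ᗮ = LinearMap.ker (B : H →ₗ[ℝ] H) := by
  ext y
  rw [Submodule.mem_orthogonal, LinearMap.mem_ker, ContinuousLinearMap.coe_coe]
  constructor
  · intro h
    have h1 : (inner ℝ (B (B y)) y : ℝ) = 0 := h _ (LinearMap.mem_range_self _ _)
    have h2 := ContinuousLinearMap.adjoint_inner_left B y (B y)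
    rw [hB] at h2
    exact inner_self_eq_zero.mp (h2.symm.trans h1)
  · rintro h _ ⟨z, rfl⟩
    have h3 := ContinuousLinearMap.adjoint_inner_right B z y
    rw [hB, h] at h3
    rw [ContinuousLinearMap.coe_coe, ← h3]
    exact inner_zero_right z


/-- Let `T` be positive with closed range, `X` its positive square root with
Moore–Penrose inverse `X‡`, and `A` a bounded operator with closed range.  Then
`A ∘ X‡` has closed range iff `P_{A*} P_T` has closed range, where `P_{A*}` is the
orthogonal projection onto `N(A)^⊥` and `P_T` that onto `R(T)`. -/
theorem closed_range_comp_pinv_iff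
    {H : Type*} [NormedAddCommGroup H] [InnerProductSpace ℝ H] [CompleteSpace H]
    (T X Xd A PA PT : H →L[ℝ] H)
    (hT : T.IsPositive) (hTrange : IsClosed (LinearMap.range (T : H →ₗ[ℝ] H) : Set H))
    (hX : X.IsPositive) (hX2 : X ∘L X = T)
    -- `Xd` is the Moore–Penrose inverse of `X`:
    (hXd1 : X ∘L Xd ∘L X = X) (hXd2 : Xd ∘L X ∘L Xd = Xd)
    (hXd3 : ContinuousLinearMap.adjoint (X ∘L Xd) = X ∘L Xd)
    (hXd4 : ContinuousLinearMap.adjoint (Xd ∘L X) = Xd ∘L X)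
    (hA : IsClosed (LinearMap.range (A : H →ₗ[ℝ] H) : Set H))
    -- `PA` is the orthogonal projection onto `N(A)^⊥` and `PT` that onto `R(T)`:
    (hPA : ∀ x, PA x ∈ (LinearMap.ker (A : H →ₗ[ℝ] H))ᗮ ∧ x - PA x ∈ ((LinearMap.ker (A : H →ₗ[ℝ] H))ᗮ)ᗮ)
    (hPT : ∀ x, PT x ∈ LinearMap.range (T : H →ₗ[ℝ] H) ∧ x - PT x ∈ (LinearMap.range (T : H →ₗ[ℝ] H))ᗮ) :
    IsClosed (LinearMap.range ((A ∘L Xd : H →L[ℝ] H) : H →ₗ[ℝ] H) : Set H) ↔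
      IsClosed (LinearMap.range ((PA ∘L PT : H →L[ℝ] H) : H →ₗ[ℝ] H) : Set H) := by
  have hXsa : ContinuousLinearMap.adjoint X = X :=
    ContinuousLinearMap.isSelfAdjoint_iff'.mp hX.isSelfAdjoint
  have hTsa : ContinuousLinearMap.adjoint T = T :=
    ContinuousLinearMap.isSelfAdjoint_iff'.mp hT.isSelfAdjoint
  -- pointwise versions of the Penrose identities
  have hXd1' : ∀ x, X (Xd (X x)) = X x := fun x => DFunLike.congr_fun hXd1 x
  have hXd2' : ∀ x, Xd (X (Xd x)) = Xd x := fun x => DFunLike.congr_fun hXd2 x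
  have hT' : ∀ x, T x = X (X x) := fun x => (DFunLike.congr_fun hX2 x).symm
  -- `ker X = ker T`
  have hkerXT : LinearMap.ker (X : H →ₗ[ℝ] H) = LinearMap.ker (T : H →ₗ[ℝ] H) := by
    ext x
    simp only [LinearMap.mem_ker, ContinuousLinearMap.coe_coe]
    constructor
    · intro h; rw [hT', h, map_zero]
    · intro h
      have h1 := ContinuousLinearMap.adjoint_inner_left X x (X x)
      rw [hXsa] at h1
      have h2 : X (X x) = 0 := by rw [← hT']; exact h
      rw [h2, inner_zero_left] at h1
      exact inner_self_eq_zero.mp h1.symm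
  set Q : H →L[ℝ] H := Xd ∘L X with hQ
  have hQapp : ∀ x, Q x = Xd (X x) := fun _ => rfl
  -- `ker Q = ker X`
  have hkerQ : LinearMap.ker (Q : H →ₗ[ℝ] H) = LinearMap.ker (X : H →ₗ[ℝ] H) := by
    ext x
    simp only [LinearMap.mem_ker, ContinuousLinearMap.coe_coe, hQapp]
    constructor
    · intro h
      have h5 := hXd1' x
      rw [h, map_zero] at h5
      exact h5.symm
    · intro h; rw [h, map_zero]
  -- `Q` is idempotent, hence has closed range
  have hQidem : ∀ x, Q (Q x) = Q x := by
    intro x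
    simp only [hQapp]
    rw [hXd1']
  have hQrange_ker : LinearMap.range (Q : H →ₗ[ℝ] H) = LinearMap.ker ((ContinuousLinearMap.id ℝ H - Q : H →L[ℝ] H) : H →ₗ[ℝ] H) := by
    ext x
    simp only [LinearMap.mem_ker, ContinuousLinearMap.coe_coe, ContinuousLinearMap.sub_apply, ContinuousLinearMap.id_apply,
      sub_eq_zero, LinearMap.mem_range]
    constructor
    · rintro ⟨y, rfl⟩; exact (hQidem y).symm
    · intro h; exact ⟨x, h.symm⟩
  have hQclosed : IsClosed ((LinearMap.range (Q : H →ₗ[ℝ] H) : Submodule ℝ H) : Set H) := by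
    rw [hQrange_ker]
    exact ContinuousLinearMap.isClosed_ker _
  -- `range Q = range T`
  have hkerTorth : (LinearMap.ker (T : H →ₗ[ℝ] H))ᗮ = LinearMap.range (T : H →ₗ[ℝ] H) := by
    rw [← orth_range_eq_ker T hTsa, Submodule.orthogonal_orthogonal_eq_closure,
      hTrange.submodule_topologicalClosure_eq]
  have hQrangeT : LinearMap.range (Q : H →ₗ[ℝ] H) = LinearMap.range (T : H →ₗ[ℝ] H) := by
    have h1 : (LinearMap.range (Q : H →ₗ[ℝ] H))ᗮᗮ = LinearMap.range (Q : H →ₗ[ℝ] H) := by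
      rw [Submodule.orthogonal_orthogonal_eq_closure,
        hQclosed.submodule_topologicalClosure_eq]
    rw [← h1, orth_range_eq_ker Q hXd4, hkerQ, hkerXT, hkerTorth]
  -- `range Xd = range Q`
  have hXdrange : LinearMap.range (Xd : H →ₗ[ℝ] H) = LinearMap.range (T : H →ₗ[ℝ] H) := by
    rw [← hQrangeT]
    apply le_antisymm
    · rintro _ ⟨z, rfl⟩
      exact ⟨Xd z, by rw [ContinuousLinearMap.coe_coe, hQapp, hXd2', ContinuousLinearMap.coe_coe]⟩
    · rintro _ ⟨z, rfl⟩
      exact ⟨X z, rfl⟩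
  -- `range PT = range T`
  have hPTrange : LinearMap.range (PT : H →ₗ[ℝ] H) = LinearMap.range (T : H →ₗ[ℝ] H) := by
    apply le_antisymm
    · rintro _ ⟨z, rfl⟩; exact (hPT z).1
    · intro y hy
      have h1 : y - PT y ∈ LinearMap.range (T : H →ₗ[ℝ] H) := sub_mem hy (hPT y).1
      have h2 : y - PT y ∈ (LinearMap.range (T : H →ₗ[ℝ] H))ᗮ := (hPT y).2
      have : y - PT y = 0 :=
        inner_self_eq_zero.mp (Submodule.inner_right_of_mem_orthogonal h1 h2)
      exact ⟨y, by rw [ContinuousLinearMap.coe_coe, ← sub_eq_zero.mp this]⟩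
  -- `A (PA x) = A x`
  have hAPA : ∀ x, A (PA x) = A x := by
    intro x
    have h1 : ((LinearMap.ker (A : H →ₗ[ℝ] H))ᗮ)ᗮ = LinearMap.ker (A : H →ₗ[ℝ] H) := by
      rw [Submodule.orthogonal_orthogonal_eq_closure,
        (ContinuousLinearMap.isClosed_ker A).submodule_topologicalClosure_eq]
    have h2 : x - PA x ∈ LinearMap.ker (A : H →ₗ[ℝ] H) := h1 ▸ (hPA x).2
    have h3 : A x - A (PA x) = 0 := by
      rw [← map_sub]; exact h2
    exact (sub_eq_zero.mp h3).symm
  -- assemble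
  set N : Submodule ℝ H := Submodule.map (PA : H →ₗ[ℝ] H) (LinearMap.range (T : H →ₗ[ℝ] H)) with hNdef
  have hN_le : N ≤ (LinearMap.ker (A : H →ₗ[ℝ] H))ᗮ := by
    rintro _ ⟨m, _, rfl⟩; exact (hPA m).1
  have hrange1 : LinearMap.range ((A ∘L Xd : H →L[ℝ] H) : H →ₗ[ℝ] H) = Submodule.map (A : H →ₗ[ℝ] H) N := by
    apply le_antisymm
    · rintro _ ⟨x, rfl⟩
      have hXdx : Xd x ∈ LinearMap.range (T : H →ₗ[ℝ] H) := by
        rw [← hXdrange]; exact LinearMap.mem_range_self _ _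
      have heq : (A ∘L Xd) x = A (PA (Xd x)) := (hAPA (Xd x)).symm
      rw [ContinuousLinearMap.coe_coe, heq]
      exact Submodule.mem_map_of_mem (Submodule.mem_map_of_mem hXdx)
    · rintro _ ⟨n, hn, rfl⟩
      obtain ⟨m, hm, rfl⟩ := hn
      rw [← hXdrange] at hm
      obtain ⟨z, rfl⟩ := hm
      exact ⟨z, (hAPA (Xd z)).symm⟩
  have hrange2 : LinearMap.range ((PA ∘L PT : H →L[ℝ] H) : H →ₗ[ℝ] H) = N := by
    apply le_antisymm
    · rintro _ ⟨x, rfl⟩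
      exact Submodule.mem_map_of_mem (hPT x).1
    · rintro _ ⟨m, hm, rfl⟩
      rw [← hPTrange] at hm
      obtain ⟨z, rfl⟩ := hm
      exact ⟨z, rfl⟩
  rw [hrange1, hrange2]
  exact image_isClosed_iff_of_le_orthogonal_ker A hA
    (fun y => ⟨PA y, (hPA y).1, hAPA y⟩) N hN_le
end

section
/- Let H be a real Hilbert space and let A and B be bounded operators on H, each with closed range. Then the composition A ∘ B has closed range if and only if the operator P_{A*} ∘ P_B has closed range, where P_{A*} is the orthogonal projection of H onto N(A)^⊥ = R(A*) and P_B is the orthogonal projection of H onto the range of B. -/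
/-- Izumino's criterion: for bounded operators `A`, `B` with closed range, the product
`A ∘ B` has closed range iff `P_{A*} ∘ P_B` has closed range, where `P_{A*}` is the
orthogonal projection onto `N(A)^⊥ = R(A*)` and `P_B` that onto `R(B)`. -/
theorem closed_range_comp_iff_proj_comp
    {H : Type*} [NormedAddCommGroup H] [InnerProductSpace ℝ H] [CompleteSpace H]
    (A B PA PB : H →L[ℝ] H)
    (hA : IsClosed (LinearMap.range (A : H →ₗ[ℝ] H) : Set H))
    (hB : IsClosed (LinearMap.range (B : H →ₗ[ℝ] H) : Set H))
    -- `PA` is the orthogonal projection onto `N(A)^⊥` and `PB` that onto `R(B)`: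
    (hPA : ∀ x, PA x ∈ (LinearMap.ker (A : H →ₗ[ℝ] H))ᗮ ∧ x - PA x ∈ ((LinearMap.ker (A : H →ₗ[ℝ] H))ᗮ)ᗮ)
    (hPB : ∀ x, PB x ∈ LinearMap.range (B : H →ₗ[ℝ] H) ∧ x - PB x ∈ (LinearMap.range (B : H →ₗ[ℝ] H))ᗮ) :
    IsClosed (LinearMap.range ((A ∘L B : H →L[ℝ] H) : H →ₗ[ℝ] H) : Set H) ↔
      IsClosed (LinearMap.range ((PA ∘L PB : H →L[ℝ] H) : H →ₗ[ℝ] H) : Set H) := by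
  classical
  set K : Submodule ℝ H := (LinearMap.ker (A : H →ₗ[ℝ] H))ᗮ with hK
  have hKclosed : IsClosed (K : Set H) := Submodule.isClosed_orthogonal _
  haveI : CompleteSpace K := hKclosed.completeSpace_coe
  haveI : CompleteSpace (LinearMap.ker (A : H →ₗ[ℝ] H)) :=
    (ContinuousLinearMap.isClosed_ker A).completeSpace_coe
  haveI : CompleteSpace (LinearMap.range (A : H →ₗ[ℝ] H)) := hA.completeSpace_coe
  -- `(ker A)ᗮᗮ = ker A`
  have horth : ((LinearMap.ker (A : H →ₗ[ℝ] H))ᗮ)ᗮ = LinearMap.ker (A : H →ₗ[ℝ] H) :=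
    Submodule.orthogonal_orthogonal _
  -- `x - PA x ∈ ker A` for all `x`
  have hPAker : ∀ x, x - PA x ∈ LinearMap.ker (A : H →ₗ[ℝ] H) := fun x => horth ▸ (hPA x).2
  -- `A (PA x) = A x`
  have hAPA : ∀ x, A (PA x) = A x := by
    intro x
    have := hPAker x
    rw [LinearMap.mem_ker, map_sub, sub_eq_zero] at this
    exact this.symm
  -- `PB y = y` for `y ∈ range B`
  have hPBfix : ∀ y ∈ LinearMap.range (B : H →ₗ[ℝ] H), PB y = y := by
    intro y hy
    have h1 : y - PB y ∈ LinearMap.range (B : H →ₗ[ℝ] H) := sub_mem hy (hPB y).1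
    have h2 : y - PB y ∈ (LinearMap.range (B : H →ₗ[ℝ] H))ᗮ := (hPB y).2
    have h0 : y - PB y = 0 := by
      have := (Submodule.mem_orthogonal _ _).1 h2 _ h1
      rwa [inner_self_eq_zero] at this
    exact (sub_eq_zero.mp h0).symm
  -- the set `S = PA '' (range B)`
  set S : Set H := PA '' (LinearMap.range (B : H →ₗ[ℝ] H) : Set H) with hS
  have hSK : S ⊆ (K : Set H) := by
    rintro _ ⟨y, -, rfl⟩
    exact (hPA y).1
  -- range of `PA ∘L PB` is `S`
  have hrangePP : (LinearMap.range ((PA ∘L PB : H →L[ℝ] H) : H →ₗ[ℝ] H) : Set H) = S := by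
    ext z
    constructor
    · rintro ⟨x, rfl⟩
      exact ⟨PB x, (hPB x).1, rfl⟩
    · rintro ⟨y, hy, rfl⟩
      exact ⟨y, by simp [ContinuousLinearMap.comp_apply, hPBfix y hy]⟩
  -- range of `A ∘L B` is `A '' S`
  have hrangeAB : (LinearMap.range ((A ∘L B : H →L[ℝ] H) : H →ₗ[ℝ] H) : Set H) = A '' S := by
    ext z
    constructor
    · rintro ⟨x, rfl⟩
      exact ⟨PA (B x), ⟨B x, ⟨x, rfl⟩, rfl⟩, by
        simp [ContinuousLinearMap.comp_apply, hAPA (B x)]⟩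
    · rintro ⟨_, ⟨y, ⟨x, rfl⟩, rfl⟩, rfl⟩
      exact ⟨x, by simp [ContinuousLinearMap.comp_apply, hAPA (B x)]⟩
  -- the restriction of `A` to `K`, corestricted to its (closed) range
  have hmem : ∀ x : K, A.comp K.subtypeL x ∈ LinearMap.range (A : H →ₗ[ℝ] H) := fun x => ⟨x, rfl⟩
  set T : K →L[ℝ] LinearMap.range (A : H →ₗ[ℝ] H) :=
    (A.comp K.subtypeL).codRestrict (LinearMap.range (A : H →ₗ[ℝ] H)) hmem with hT
  have hTinj : LinearMap.ker (T : K →ₗ[ℝ] LinearMap.range (A : H →ₗ[ℝ] H)) = ⊥ := by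
    rw [LinearMap.ker_eq_bot']
    rintro ⟨x, hx⟩ hx0
    have hAx : A x = 0 := congrArg Subtype.val hx0
    have hker : x ∈ LinearMap.ker (A : H →ₗ[ℝ] H) := hAx
    have : (inner ℝ x x : ℝ) = 0 := (Submodule.mem_orthogonal _ _).1 hx _ hker
    rw [inner_self_eq_zero] at this
    exact Subtype.ext this
  have hTsurj : LinearMap.range (T : K →ₗ[ℝ] LinearMap.range (A : H →ₗ[ℝ] H)) = ⊤ := by
    rw [LinearMap.range_eq_top]
    rintro ⟨_, x, rfl⟩
    refine ⟨⟨PA x, (hPA x).1⟩, ?_⟩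
    exact Subtype.ext (hAPA x)
  -- `T` is a continuous linear equiv, hence antilipschitz
  set e : K ≃L[ℝ] LinearMap.range (A : H →ₗ[ℝ] H) :=
    ContinuousLinearEquiv.ofBijective T hTinj hTsurj with he
  have hcoe : ∀ x : K, ((e x : LinearMap.range (A : H →ₗ[ℝ] H)) : H) = A (x : H) := fun x => rfl
  have hc : AntilipschitzWith ‖(e.symm : LinearMap.range (A : H →ₗ[ℝ] H) →L[ℝ] K)‖₊
      (fun x : K => A (x : H)) := by
    intro x y
    have h1 := e.antilipschitz x y
    have h2 : edist (e x) (e y) = edist (A (x : H)) (A (y : H)) := by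
      rw [Subtype.edist_eq, hcoe, hcoe]
    rwa [h2] at h1
  have hcont : Continuous fun x : K => A (x : H) :=
    A.continuous.comp continuous_subtype_val
  have hCE : Topology.IsClosedEmbedding fun x : K => A (x : H) :=
    hc.isClosedEmbedding ((A.comp K.subtypeL).uniformContinuous)
  -- `A '' S` as the image under the restricted map
  have himg : A '' S = (fun x : K => A (x : H)) '' (Subtype.val ⁻¹' S) := by
    ext z
    constructor
    · rintro ⟨s, hs, rfl⟩
      exact ⟨⟨s, hSK hs⟩, hs, rfl⟩
    · rintro ⟨⟨s, hsK⟩, hs, rfl⟩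
      exact ⟨s, hs, rfl⟩
  rw [hrangeAB, hrangePP]
  constructor
  · -- `A '' S` closed → `S` closed
    intro hAS
    refine isClosed_of_closure_subset ?_
    intro x hx
    have hxK : x ∈ K := closure_minimal hSK hKclosed hx
    have hAx : A x ∈ closure (A '' S) :=
      image_closure_subset_closure_image A.continuous ⟨x, hx, rfl⟩
    rw [hAS.closure_eq] at hAx
    obtain ⟨s, hs, hsA⟩ := hAx
    have hsK : s ∈ K := hSK hs
    have hker : x - s ∈ LinearMap.ker (A : H →ₗ[ℝ] H) := by
      rw [LinearMap.mem_ker, map_sub, ContinuousLinearMap.coe_coe, hsA, sub_self]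
    have hxs : x - s ∈ K := sub_mem hxK hsK
    have h0 : x - s = 0 := by
      have := (Submodule.mem_orthogonal _ _).1 hxs _ hker
      rwa [inner_self_eq_zero] at this
    rwa [sub_eq_zero.mp h0]
  · -- `S` closed → `A '' S` closed
    intro hSclosed
    rw [himg]
    exact hCE.isClosedMap _ (hSclosed.preimage continuous_subtype_val)
end
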